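/- Suppose an n×n positive semidefinite matrix M factors as M = [[𝓛_FF, 0],[𝓛_CF, I_CC]] · diag(𝓓, S) · [[𝓛_FF, 0],[𝓛_CF, I_CC]]ᵀ for a bipartition (F, C) of [n], where 𝓛_FF is invertible, 𝓓 is diagonal with nonnegative entries, and S is positive semidefinite. Let f₁,…,f_z be a basis of the null space of M, and let Π⊥ be the orthogonal projection onto the complement of the span of (f₁)_C,…,(f_z)_C. Then S† = Π⊥ (M†)_{CC} Π⊥, where (M†)_{CC} is M† restricted to rows and columns in C. -/

import Mathlib

open Matrix

open scoped Classical in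
/-- Moore–Penrose pseudoinverse of a square real matrix, via the Penrose conditions. -/
noncomputable def pinv {ι : Type*} [Fintype ι] (A : Matrix ι ι ℝ) : Matrix ι ι ℝ :=
  if h : ∃ B : Matrix ι ι ℝ,
      A * B * A = A ∧ B * A * B = B ∧ (A * B)ᵀ = A * B ∧ (B * A)ᵀ = B * A
  then h.choose else 0

set_option linter.unusedSectionVars false

namespace PinvAux

variable {ι : Type*} [Fintype ι] [DecidableEq ι]

def IsP (A B : Matrix ι ι ℝ) : Prop :=
  A * B * A = A ∧ B * A * B = B ∧ (A * B)ᵀ = A * B ∧ (B * A)ᵀ = B * A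

theorem isP_unique {A B B' : Matrix ι ι ℝ} (h : IsP A B) (h' : IsP A B') : B = B' := by
  obtain ⟨h1, h2, h3, h4⟩ := h
  obtain ⟨h1', h2', h3', h4'⟩ := h'
  have e1 : Aᵀ = Aᵀ * (A * B') := by
    conv_lhs => rw [← h1']
    rw [transpose_mul, h3']
  have e2 : Aᵀ = (B * A) * Aᵀ := by
    conv_lhs => rw [← h1, mul_assoc]
    rw [transpose_mul, h4]
  have s1 : B = B * A * B' := by
    calc B = B * (A * B) := by rw [← mul_assoc, h2]
    _ = B * (A * B)ᵀ := by rw [h3]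
    _ = B * (Bᵀ * Aᵀ) := by rw [transpose_mul]
    _ = B * (Bᵀ * (Aᵀ * (A * B'))) := by rw [← e1]
    _ = (B * (Bᵀ * Aᵀ)) * (A * B') := by simp only [mul_assoc]
    _ = (B * (A * B)ᵀ) * (A * B') := by rw [transpose_mul]
    _ = (B * (A * B)) * (A * B') := by rw [h3]
    _ = (B * A * B) * A * B' := by simp only [mul_assoc]
    _ = B * A * B' := by rw [h2]
  have s2 : B' = B * A * B' := by
    calc B' = B' * A * B' := h2'.symm
    _ = (B' * A)ᵀ * B' := by rw [h4']
    _ = Aᵀ * B'ᵀ * B' := by rw [transpose_mul]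
    _ = ((B * A) * Aᵀ) * B'ᵀ * B' := by rw [← e2]
    _ = B * A * (Aᵀ * B'ᵀ) * B' := by simp only [mul_assoc]
    _ = B * A * (B' * A)ᵀ * B' := by rw [transpose_mul]
    _ = B * A * (B' * A) * B' := by rw [h4']
    _ = B * A * (B' * A * B') := by simp only [mul_assoc]
    _ = B * A * B' := by rw [h2']
  rw [s1, ← s2]

theorem exists_isP {A : Matrix ι ι ℝ} (hA : A.IsHermitian) :
    ∃ B : Matrix ι ι ℝ, IsP A B ∧ Bᵀ = B ∧ A * B = B * A := by
  set U : Matrix ι ι ℝ := (hA.eigenvectorUnitary : Matrix ι ι ℝ) with hU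
  have hU2 : Uᵀ * U = 1 := by
    have := (mem_unitaryGroup_iff').mp hA.eigenvectorUnitary.2
    rwa [star_eq_conjTranspose, conjTranspose_eq_transpose_of_trivial] at this
  have hspec : A = U * diagonal hA.eigenvalues * Uᵀ := by
    have := hA.spectral_theorem
    rwa [Unitary.conjStarAlgAut_apply, star_eq_conjTranspose, conjTranspose_eq_transpose_of_trivial,
      RCLike.ofReal_real_eq_id, Function.id_comp] at this
  set v : ι → ℝ := hA.eigenvalues with hv
  set w : ι → ℝ := fun i => (v i)⁻¹ with hw
  have key : ∀ d₁ d₂ : ι → ℝ, (U * diagonal d₁ * Uᵀ) * (U * diagonal d₂ * Uᵀ) =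
      U * diagonal (fun i => d₁ i * d₂ i) * Uᵀ := by
    intro d₁ d₂
    have hd : diagonal d₁ * diagonal d₂ = diagonal (fun i => d₁ i * d₂ i) := by
      rw [diagonal_mul_diagonal]
    calc (U * diagonal d₁ * Uᵀ) * (U * diagonal d₂ * Uᵀ)
        = U * diagonal d₁ * (Uᵀ * U) * (diagonal d₂ * Uᵀ) := by simp only [mul_assoc]
    _ = U * (diagonal d₁ * diagonal d₂) * Uᵀ := by rw [hU2, mul_one]; simp only [mul_assoc]
    _ = U * diagonal (fun i => d₁ i * d₂ i) * Uᵀ := by rw [hd]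
  have keyT : ∀ d : ι → ℝ, (U * diagonal d * Uᵀ)ᵀ = U * diagonal d * Uᵀ := by
    intro d
    rw [transpose_mul, transpose_mul, transpose_transpose, diagonal_transpose, mul_assoc]
  have hcong : ∀ d₁ d₂ : ι → ℝ, d₁ = d₂ → U * diagonal d₁ * Uᵀ = U * diagonal d₂ * Uᵀ := by
    rintro _ _ rfl; rfl
  refine ⟨U * diagonal w * Uᵀ, ⟨?_, ?_, ?_, ?_⟩, keyT _, ?_⟩
  · rw [hspec, key, key]
    refine hcong _ _ (funext fun i => ?_)
    rcases eq_or_ne (v i) 0 with h | h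
    · simp [hw, h]
    · simp only [hw]; field_simp
  · rw [hspec, key, key]
    refine hcong _ _ (funext fun i => ?_)
    rcases eq_or_ne (v i) 0 with h | h
    · simp [hw, h]
    · simp only [hw]; field_simp
  · rw [hspec, key]; exact keyT _
  · rw [hspec, key]; exact keyT _
  · rw [hspec, key, key]
    exact hcong _ _ (funext fun i => mul_comm _ _)

theorem isP_pinv {A : Matrix ι ι ℝ} (h : ∃ B, IsP A B) : IsP A (pinv A) := by
  have h' : ∃ B : Matrix ι ι ℝ,
      A * B * A = A ∧ B * A * B = B ∧ (A * B)ᵀ = A * B ∧ (B * A)ᵀ = B * A := h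
  rw [pinv, dif_pos h']
  exact h'.choose_spec

theorem pinv_eq {A B : Matrix ι ι ℝ} (hB : IsP A B) : pinv A = B :=
  isP_unique (isP_pinv ⟨B, hB⟩) hB

theorem isP_pinv_of_hermitian {A : Matrix ι ι ℝ} (hA : A.IsHermitian) : IsP A (pinv A) := by
  obtain ⟨B, hB, -, -⟩ := exists_isP hA
  exact isP_pinv ⟨B, hB⟩

theorem pinv_transpose_of_hermitian {A : Matrix ι ι ℝ} (hA : A.IsHermitian) :
    (pinv A)ᵀ = pinv A := by
  obtain ⟨B, hB, hBt, -⟩ := exists_isP hA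
  rw [pinv_eq hB, hBt]

end PinvAux

/-- If a PSD matrix `M` factors as a block lower-triangular congruence of
`diag(𝓓, S)`, and `f₁,…,f_z` is a basis of the null space of `M`, then
`S† = Π⊥ (M†)_{CC} Π⊥`, where `Π⊥` is the orthogonal projection onto the complement
of the span of the restrictions `(fᵢ)_C` (expressed as the matrix
`I - G (GᵀG)† Gᵀ` where `G` has columns `(fᵢ)_C`). -/
theorem stmt13 {F C : Type*} [Fintype F] [Fintype C] [DecidableEq F] [DecidableEq C]
    (M : Matrix (F ⊕ C) (F ⊕ C) ℝ) (hM : M.PosSemidef)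
    (LFF : Matrix F F ℝ) (LCF : Matrix C F ℝ) (d : F → ℝ) (S : Matrix C C ℝ)
    (hLFF : IsUnit LFF.det) (hd : ∀ i, 0 ≤ d i) (hS : S.PosSemidef)
    (hfac : M = Matrix.fromBlocks LFF 0 LCF 1 *
        Matrix.fromBlocks (Matrix.diagonal d) 0 0 S *
        (Matrix.fromBlocks LFF 0 LCF 1)ᵀ)
    {z : ℕ} (f : Fin z → (F ⊕ C → ℝ))
    (hker : ∀ i, M.mulVec (f i) = 0)
    (hindep : LinearIndependent ℝ f)
    (hspan : ∀ x, M.mulVec x = 0 → x ∈ Submodule.span ℝ (Set.range f))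
    (G : Matrix C (Fin z) ℝ) (hG : G = Matrix.of fun c i => f i (Sum.inr c))
    (Pperp : Matrix C C ℝ) (hP : Pperp = 1 - G * pinv (Gᵀ * G) * Gᵀ) :
    pinv S = Pperp * ((pinv M).submatrix Sum.inr Sum.inr) * Pperp := by
  classical
  set L : Matrix (F ⊕ C) (F ⊕ C) ℝ := Matrix.fromBlocks LFF 0 LCF 1 with hL
  set D : Matrix (F ⊕ C) (F ⊕ C) ℝ := Matrix.fromBlocks (Matrix.diagonal d) 0 0 S with hD
  have hLdet : IsUnit L.det := by
    rw [hL, Matrix.det_fromBlocks_zero₁₂]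
    simpa using hLFF
  have hSsymm : Sᵀ = S := by
    have := hS.isHermitian
    rwa [Matrix.IsHermitian, conjTranspose_eq_transpose_of_trivial] at this
  -- Step A : S kills the C-restrictions of the kernel vectors
  have hSf : ∀ i, S *ᵥ (fun c => f i (Sum.inr c)) = 0 := by
    intro i
    have h0 : L *ᵥ (D *ᵥ (Lᵀ *ᵥ f i)) = 0 := by
      have h := hker i
      rw [hfac] at h
      rwa [← Matrix.mulVec_mulVec, ← Matrix.mulVec_mulVec] at h
    have h1 : D *ᵥ (Lᵀ *ᵥ f i) = 0 := by
      have h := congrArg (fun x => L⁻¹ *ᵥ x) h0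
      simp only [Matrix.mulVec_mulVec, Matrix.mulVec_zero] at h
      rw [← Matrix.mul_assoc, Matrix.nonsing_inv_mul L hLdet, Matrix.one_mul] at h
      rwa [Matrix.mulVec_mulVec]
    have h2 : D *ᵥ (Lᵀ *ᵥ Sum.elim (f i ∘ Sum.inl) (f i ∘ Sum.inr)) = 0 := by
      rw [Sum.elim_comp_inl_inr]; exact h1
    rw [hL, hD, Matrix.fromBlocks_transpose, Matrix.fromBlocks_mulVec,
      Matrix.fromBlocks_mulVec] at h2
    have h3 := congrFun h2
    funext c
    have h4 := h3 (Sum.inr c)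
    simpa [Matrix.zero_mulVec, Matrix.one_mulVec, Function.comp_def] using h4
  have hSG : S * G = 0 := by
    ext c j
    have h := congrFun (hSf j) c
    simp only [Matrix.mul_apply, hG, Matrix.of_apply, Matrix.zero_apply]
    simpa [Matrix.mulVec, dotProduct] using h
  have hGtS : Gᵀ * S = 0 := by
    have h : (S * G)ᵀ = 0 := by rw [hSG]; simp
    rwa [Matrix.transpose_mul, hSsymm] at h
  -- Step C : pseudoinverse of GᵀG
  have hGtG : (Gᵀ * G).PosSemidef := by
    have h := Matrix.posSemidef_conjTranspose_mul_self G
    rwa [conjTranspose_eq_transpose_of_trivial] at h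
  have hGtGsymm : (Gᵀ * G)ᵀ = Gᵀ * G := by rw [Matrix.transpose_mul, Matrix.transpose_transpose]
  set H : Matrix (Fin z) (Fin z) ℝ := pinv (Gᵀ * G) with hH
  have hHP : PinvAux.IsP (Gᵀ * G) H := PinvAux.isP_pinv_of_hermitian hGtG.isHermitian
  have hHt : Hᵀ = H := PinvAux.pinv_transpose_of_hermitian hGtG.isHermitian
  -- Step D : projection properties
  have hPt : Pperpᵀ = Pperp := by
    rw [hP, Matrix.transpose_sub, Matrix.transpose_one, Matrix.transpose_mul,
      Matrix.transpose_mul, Matrix.transpose_transpose, hHt]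
    simp only [Matrix.mul_assoc]
  have hPS : Pperp * S = S := by
    rw [hP, Matrix.sub_mul, Matrix.one_mul, Matrix.mul_assoc, hGtS, Matrix.mul_zero, sub_zero]
  have hSP : S * Pperp = S := by
    have h := congrArg Matrix.transpose hPS
    rwa [Matrix.transpose_mul, hPt, hSsymm] at h
  -- Step E : Pperp kills G
  have h1ra : Gᵀ * (G * (H * (Gᵀ * G))) = Gᵀ * G := by
    have h := hHP.1
    simpa only [Matrix.mul_assoc] using h
  have hGHGG : G * H * (Gᵀ * G) = G := by
    have hTt : (G * H * (Gᵀ * G))ᵀ = Gᵀ * G * (H * Gᵀ) := by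
      rw [Matrix.transpose_mul, hGtGsymm, Matrix.transpose_mul, hHt]
    have hX : (G - G * H * (Gᵀ * G))ᵀ * (G - G * H * (Gᵀ * G)) = 0 := by
      rw [Matrix.transpose_sub, Matrix.sub_mul, Matrix.mul_sub, Matrix.mul_sub, hTt]
      have e1 : Gᵀ * (G * H * (Gᵀ * G)) = Gᵀ * G := by
        simpa only [Matrix.mul_assoc] using h1ra
      have e2 : Gᵀ * G * (H * Gᵀ) * G = Gᵀ * G := by
        simpa only [Matrix.mul_assoc] using h1ra
      have e3 : Gᵀ * G * (H * Gᵀ) * (G * H * (Gᵀ * G)) = Gᵀ * G := by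
        simp only [Matrix.mul_assoc]
        rw [h1ra, h1ra]
      rw [e1, e2, e3]
      abel
    have hX0 : G - G * H * (Gᵀ * G) = 0 := by
      apply Matrix.conjTranspose_mul_self_eq_zero.mp
      rwa [conjTranspose_eq_transpose_of_trivial]
    have := sub_eq_zero.mp hX0
    exact this.symm
  have hPG : Pperp * G = 0 := by
    rw [hP, Matrix.sub_mul, Matrix.one_mul, Matrix.mul_assoc (G * H) Gᵀ G, hGHGG, sub_self]
  have hPP : Pperp * Pperp = Pperp := by
    calc Pperp * Pperp = Pperp * (1 - G * H * Gᵀ) := by rw [← hP]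
    _ = Pperp - Pperp * G * (H * Gᵀ) := by
          rw [Matrix.mul_sub, Matrix.mul_one]; simp only [Matrix.mul_assoc]
    _ = Pperp := by rw [hPG, Matrix.zero_mul, sub_zero]
  -- Step F : the matrices E and W
  set E : Matrix (F ⊕ C) C ℝ := Matrix.fromRows 0 1 with hE
  set W : Matrix (F ⊕ C) C ℝ := Matrix.fromRows (-((LFF⁻¹)ᵀ * LCFᵀ)) 1 with hW
  have hLFFt : LFFᵀ * (LFF⁻¹)ᵀ = 1 := by
    rw [← Matrix.transpose_mul, Matrix.nonsing_inv_mul LFF hLFF, Matrix.transpose_one]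
  have hLtW : Lᵀ * W = E := by
    have hTop : LFFᵀ * -((LFF⁻¹)ᵀ * LCFᵀ) + LCFᵀ * (1 : Matrix C C ℝ) = 0 := by
      rw [Matrix.mul_neg, ← Matrix.mul_assoc, hLFFt, Matrix.one_mul, Matrix.mul_one,
        neg_add_cancel]
    have hBot : ((0 : Matrix F C ℝ))ᵀ * -((LFF⁻¹)ᵀ * LCFᵀ) +
        (1 : Matrix C C ℝ)ᵀ * (1 : Matrix C C ℝ) = 1 := by
      simp
    rw [hL, hW, hE, Matrix.fromBlocks_transpose, Matrix.fromBlocks_mul_fromRows, hTop, hBot]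
  have hMW : M * W = E * S := by
    rw [hfac]
    calc L * D * Lᵀ * W = L * (D * (Lᵀ * W)) := by simp only [Matrix.mul_assoc]
    _ = L * (D * E) := by rw [hLtW]
    _ = E * S := by
        rw [hD, hE, hL, Matrix.fromBlocks_mul_fromRows, Matrix.fromBlocks_mul_fromRows,
          Matrix.fromRows_mul]
        congr 1 <;> simp
  have hEtW : Eᵀ * W = 1 := by
    rw [hE, hW, Matrix.transpose_fromRows, Matrix.fromCols_mul_fromRows]
    simp
  have hEt : ∀ (Z : Matrix (F ⊕ C) (F ⊕ C) ℝ), Eᵀ * Z = Z.submatrix Sum.inr id := by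
    intro Z
    ext c x
    simp [hE, Matrix.mul_apply, Matrix.fromRows_apply_inl, Matrix.fromRows_apply_inr, Fintype.sum_sum_type, Matrix.one_apply,
      ite_mul, Finset.sum_ite_eq]
  have hEtC : ∀ (Z : Matrix (F ⊕ C) C ℝ), Eᵀ * Z = Z.submatrix Sum.inr id := by
    intro Z
    ext c x
    simp [hE, Matrix.mul_apply, Matrix.fromRows_apply_inl, Matrix.fromRows_apply_inr, Fintype.sum_sum_type, Matrix.one_apply,
      ite_mul, Finset.sum_ite_eq]
  have hE2 : ∀ (Z : Matrix C (F ⊕ C) ℝ), Z * E = Z.submatrix id Sum.inr := by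
    intro Z
    ext c c'
    simp [hE, Matrix.mul_apply, Matrix.fromRows_apply_inl, Matrix.fromRows_apply_inr, Fintype.sum_sum_type, Matrix.one_apply,
      mul_ite, Finset.sum_ite_eq']
  have hEtNE : Eᵀ * (pinv M) * E = (pinv M).submatrix Sum.inr Sum.inr := by
    rw [hEt, hE2]
    rfl
  have hNP : PinvAux.IsP M (pinv M) := PinvAux.isP_pinv_of_hermitian hM.isHermitian
  have hNt : (pinv M)ᵀ = pinv M := PinvAux.pinv_transpose_of_hermitian hM.isHermitian
  -- Step H : kernel columns
  set R : Matrix (F ⊕ C) C ℝ := W - (pinv M) * (M * W) with hR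
  have hMR : M * R = 0 := by
    rw [hR, Matrix.mul_sub, ← Matrix.mul_assoc, ← Matrix.mul_assoc, hNP.1, sub_self]
  have hcol : ∀ j : C, ∃ cf : Fin z → ℝ, (fun p => R p j) = fun p => ∑ i, cf i * f i p := by
    intro j
    have hcolker : M *ᵥ (fun p => R p j) = 0 := by
      funext p
      have h : (M * R) p j = 0 := by rw [hMR]; rfl
      simpa [Matrix.mulVec, dotProduct, Matrix.mul_apply] using h
    have h := hspan _ hcolker
    rw [Submodule.mem_span_range_iff_exists_fun] at h
    obtain ⟨c0, hc0⟩ := h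
    refine ⟨c0, ?_⟩
    rw [← hc0]
    funext p
    simp [Finset.sum_apply, Pi.smul_apply, smul_eq_mul]
  choose cf hcf using hcol
  set Cm : Matrix (Fin z) C ℝ := Matrix.of (fun i j => cf j i) with hCm
  have hEtR : Eᵀ * R = G * Cm := by
    rw [hEtC]
    ext c j
    have h := congrFun (hcf j) (Sum.inr c)
    simp only [Matrix.submatrix_apply, id_eq]
    rw [h]
    simp only [Matrix.mul_apply, hCm, hG, Matrix.of_apply]
    exact Finset.sum_congr rfl fun i _ => mul_comm _ _
  -- Step I : the key identity
  have hNMW : (pinv M) * (M * W) = W - R := by rw [hR, sub_sub_cancel]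
  have key : Pperp * ((pinv M).submatrix Sum.inr Sum.inr) * S = Pperp := by
    rw [← hEtNE]
    calc Pperp * (Eᵀ * (pinv M) * E) * S
        = Pperp * (Eᵀ * ((pinv M) * (E * S))) := by simp only [Matrix.mul_assoc]
    _ = Pperp * (Eᵀ * ((pinv M) * (M * W))) := by rw [hMW]
    _ = Pperp * (Eᵀ * (W - R)) := by rw [hNMW]
    _ = Pperp * (Eᵀ * W) - Pperp * (Eᵀ * R) := by rw [Matrix.mul_sub, Matrix.mul_sub]
    _ = Pperp - Pperp * G * Cm := by
          rw [hEtW, hEtR, Matrix.mul_one]; simp only [Matrix.mul_assoc]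
    _ = Pperp := by rw [hPG, Matrix.zero_mul, sub_zero]
  have hNcct : ((pinv M).submatrix Sum.inr Sum.inr)ᵀ = (pinv M).submatrix Sum.inr Sum.inr := by
    rw [Matrix.transpose_submatrix, hNt]
  have keyT : S * ((pinv M).submatrix Sum.inr Sum.inr) * Pperp = Pperp := by
    have h := congrArg Matrix.transpose key
    rwa [Matrix.transpose_mul, Matrix.transpose_mul, hPt, hNcct, hSsymm, ← mul_assoc] at h
  -- Step J : Penrose conditions for the candidate
  set Ncc : Matrix C C ℝ := (pinv M).submatrix Sum.inr Sum.inr with hNcc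
  have hSB : S * (Pperp * Ncc * Pperp) = Pperp := by
    calc S * (Pperp * Ncc * Pperp) = S * Pperp * Ncc * Pperp := by
          simp only [Matrix.mul_assoc]
    _ = S * Ncc * Pperp := by rw [hSP]
    _ = Pperp := keyT
  have hBS : (Pperp * Ncc * Pperp) * S = Pperp := by
    calc (Pperp * Ncc * Pperp) * S = Pperp * Ncc * (Pperp * S) := by
          simp only [Matrix.mul_assoc]
    _ = Pperp * Ncc * S := by rw [hPS]
    _ = Pperp := key
  have hfinal : PinvAux.IsP S (Pperp * Ncc * Pperp) := by
    refine ⟨?_, ?_, ?_, ?_⟩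
    · rw [hSB, hPS]
    · rw [hBS, ← Matrix.mul_assoc, ← Matrix.mul_assoc, hPP]
    · rw [hSB, hPt]
    · rw [hBS, hPt]
  exact PinvAux.isP_unique (PinvAux.isP_pinv_of_hermitian hS.isHermitian) hfinal
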